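/- Let r ≥ 1 be an integer, d : Fin r → ℝ with d₁ ≥ d₂ ≥ ⋯ ≥ d_r > 0, and let c̄ > 0 be a fixed noise-level variable. Let ε > 0 satisfy ε ≤ min(1/c̄, 1/dᵢ) for every i. Define λ* by λᵢ* = min(1/c̄, 1/dᵢ). Then λ* belongs to the feasible set F = {λ : Fin r → ℝ | λ₁ ≤ λ₂ ≤ ⋯ ≤ λ_r and ε ≤ λᵢ ≤ 1/c̄ for all i}, and for every λ ∈ F one has Σᵢ dᵢ λᵢ* − Σᵢ log λᵢ* ≤ Σᵢ dᵢ λᵢ − Σᵢ log λᵢ. -/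

import Mathlib

/-- Pointwise inequality: `m = min (1/c) (1/d)` minimizes `x ↦ d*x - log x`
over `(0, 1/c]`. -/
lemma rcml_pointwise (dv c x : ℝ) (hd : 0 < dv) (hc : 0 < c)
    (hx : 0 < x) (hxle : x ≤ 1 / c) :
    dv * min (1 / c) (1 / dv) - Real.log (min (1 / c) (1 / dv)) ≤
      dv * x - Real.log x := by
  rcases le_or_gt (1 / dv) (1 / c) with h | h
  · rw [min_eq_right h]
    have hdx : 0 < dv * x := mul_pos hd hx
    have hlog : Real.log (dv * x) ≤ dv * x - 1 :=
      Real.log_le_sub_one_of_pos hdx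
    rw [Real.log_mul (ne_of_gt hd) (ne_of_gt hx)] at hlog
    have : Real.log (1 / dv) = -Real.log dv := by
      rw [one_div, Real.log_inv]
    rw [this, mul_one_div, div_self (ne_of_gt hd)]
    linarith
  · rw [min_eq_left h.le]
    set m := 1 / c with hm
    have hmpos : 0 < m := by positivity
    have hxm : x ≤ m := hxle
    -- tangent line to log at m: log x ≤ log m + (x - m)/m
    have hlog : Real.log (x / m) ≤ x / m - 1 :=
      Real.log_le_sub_one_of_pos (by positivity)
    rw [Real.log_div (ne_of_gt hx) (ne_of_gt hmpos)] at hlog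
    -- d ≤ 1/m
    have hdm : dv * m ≤ 1 := by
      have : m < 1 / dv := h
      rw [lt_div_iff₀ hd] at this
      nlinarith
    -- d*(m - x) ≤ (m - x)/m ≤ log m - log x
    have h1 : dv * (m - x) ≤ (m - x) / m := by
      rw [le_div_iff₀ hmpos]
      nlinarith
    have h2 : (m - x) / m ≤ Real.log m - Real.log x := by
      have : x / m - 1 = -((m - x) / m) := by field_simp; ring
      rw [this] at hlog
      linarith
    nlinarith

/-- Inner solution of the RCML_LB problem for fixed noise level `c̄`:
`λᵢ* = min(1/c̄, 1/dᵢ)` is feasible and globally minimizes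
`λ ↦ Σᵢ dᵢλᵢ − Σᵢ log λᵢ` over `{λ | λ₁ ≤ ⋯ ≤ λ_r, ε ≤ λᵢ ≤ 1/c̄}`. -/
theorem rcml_lb_inner_closed_form
    (r : ℕ) (hr : 1 ≤ r) (d : Fin r → ℝ)
    (hd_desc : ∀ i j : Fin r, i ≤ j → d j ≤ d i)
    (hd_pos : ∀ i, 0 < d i)
    (cbar : ℝ) (hcbar : 0 < cbar)
    (ε : ℝ) (hε : 0 < ε) (hεle : ∀ i, ε ≤ min (1 / cbar) (1 / d i)) :
    ((∀ i j : Fin r, i ≤ j →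
        min (1 / cbar) (1 / d i) ≤ min (1 / cbar) (1 / d j)) ∧
      (∀ i, ε ≤ min (1 / cbar) (1 / d i) ∧ min (1 / cbar) (1 / d i) ≤ 1 / cbar)) ∧
    ∀ l : Fin r → ℝ,
      ((∀ i j : Fin r, i ≤ j → l i ≤ l j) ∧ (∀ i, ε ≤ l i ∧ l i ≤ 1 / cbar)) →
      (∑ i, d i * min (1 / cbar) (1 / d i)) -
          (∑ i, Real.log (min (1 / cbar) (1 / d i))) ≤
        (∑ i, d i * l i) - (∑ i, Real.log (l i)) := by
  refine ⟨⟨fun i j hij => ?_, fun i => ⟨hεle i, min_le_left _ _⟩⟩, ?_⟩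
  · exact min_le_min le_rfl
      (one_div_le_one_div_of_le (hd_pos j) (hd_desc i j hij))
  · intro l ⟨hmono, hbox⟩
    have key : ∀ i, d i * min (1 / cbar) (1 / d i) -
        Real.log (min (1 / cbar) (1 / d i)) ≤ d i * l i - Real.log (l i) := by
      intro i
      exact rcml_pointwise (d i) cbar (l i) (hd_pos i) hcbar
        (lt_of_lt_of_le hε (hbox i).1) (hbox i).2
    have := Finset.sum_le_sum (fun i (_ : i ∈ Finset.univ) => key i)
    simpa [Finset.sum_sub_distrib] using this
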